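/- Let γ > 0 and consider the depolarizing dissipator on M_2(ℂ) with jump operators L_1 = √γ·σˣ, L_2 = √γ·σʸ, L_3 = √γ·σᶻ (the Pauli matrices). Then for every time-dependent Hermitian Hamiltonian H : ℝ → M_2(ℂ) (with continuous entries), every pair of solutions ρ, σ of the master equation for L_t = −i[H(t), ·] + Σ_{j=1}^3 D_{L_j} whose values at time s are density matrices satisfies ‖ρ(t) − σ(t)‖₁ ≤ e^{−4γ·(t−s)}·‖ρ(s) − σ(s)‖₁ for all t ≥ s ≥ 0. -/

import Mathlib

open scoped ComplexOrder Kronecker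
open Matrix

namespace Paper

variable {n : Type*} [Fintype n] [DecidableEq n]

/-- Trace norm: sum of singular values. -/
noncomputable def traceNorm (A : Matrix n n ℂ) : ℝ :=
  ∑ i, Real.sqrt ((Matrix.posSemidef_conjTranspose_mul_self A).isHermitian.eigenvalues i)

/-- The dissipator associated with a single jump operator. -/
noncomputable def dissipator (L x : Matrix n n ℂ) : Matrix n n ℂ :=
  L * x * Lᴴ - ((1 : ℂ)/2) • (Lᴴ * L * x + x * (Lᴴ * L))

/-- Total dissipator of a family of jump operators. -/
noncomputable def totalDissipator {m : ℕ} (L : Fin m → Matrix n n ℂ) (x : Matrix n n ℂ) :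
    Matrix n n ℂ :=
  ∑ j, dissipator (L j) x

/-- The Hamiltonian commutator term `-i[H, x]`. -/
noncomputable def hamTerm (H x : Matrix n n ℂ) : Matrix n n ℂ :=
  (-Complex.I) • (H * x - x * H)

/-- A solution of the master equation `ρ' = L_t(ρ)` starting at time `s`
(differentiable entrywise). -/
def IsSolution (Lt : ℝ → Matrix n n ℂ → Matrix n n ℂ) (s : ℝ) (ρ : ℝ → Matrix n n ℂ) : Prop :=
  ∀ t, s ≤ t → ∀ i j, HasDerivAt (fun u => ρ u i j) ((Lt t (ρ t)) i j) t

/-- Density matrix: Hermitian, positive semidefinite, trace one. -/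
def IsDensity (ρ : Matrix n n ℂ) : Prop := ρ.PosSemidef ∧ ρ.trace = 1

/-- Exponential contractivity with constants `K, γ` of a time-dependent Lindbladian. -/
def ExpContractiveWith (Lt : ℝ → Matrix n n ℂ → Matrix n n ℂ) (K γ : ℝ) : Prop :=
  ∀ s t : ℝ, 0 ≤ s → s ≤ t → ∀ ρ σ : ℝ → Matrix n n ℂ,
    IsSolution Lt s ρ → IsSolution Lt s σ → IsDensity (ρ s) → IsDensity (σ s) →
    traceNorm (ρ t - σ t) ≤ K * Real.exp (-γ * (t - s)) * traceNorm (ρ s - σ s)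

/-- Exponential contractivity of a time-dependent Lindbladian. -/
def ExpContractive (Lt : ℝ → Matrix n n ℂ → Matrix n n ℂ) : Prop :=
  ∃ K γ : ℝ, 0 < K ∧ 0 < γ ∧ ExpContractiveWith Lt K γ

/-- Time-dependent Hamiltonian: Hermitian values and continuous entries. -/
def IsHamiltonianFamily (H : ℝ → Matrix n n ℂ) : Prop :=
  (∀ t, (H t).IsHermitian) ∧ ∀ i j, Continuous fun t => H t i j

/-- Driven Lindbladian `x ↦ -i[H(t), x] + D(x)`. -/
noncomputable def driven {m : ℕ} (H : ℝ → Matrix n n ℂ) (L : Fin m → Matrix n n ℂ)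
    (t : ℝ) (x : Matrix n n ℂ) : Matrix n n ℂ :=
  hamTerm (H t) x + totalDissipator L x

/-- Hamiltonian-independent contractivity of a dissipator. -/
def HamIndepContractive {m : ℕ} (L : Fin m → Matrix n n ℂ) : Prop :=
  ∀ H : ℝ → Matrix n n ℂ, IsHamiltonianFamily H → ExpContractive (driven H L)

/-- The operator norm (largest singular value). -/
noncomputable def opNorm (A : Matrix n n ℂ) : ℝ :=
  ‖LinearMap.toContinuousLinearMap (Matrix.toEuclideanLin A)‖

end Paper

namespace Paper


section Aux

/-- Frobenius norm squared. -/
noncomputable def frob {n : Type*} [Fintype n] (A : Matrix n n ℂ) : ℝ :=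
  ∑ i, ∑ j, Complex.normSq (A i j)

variable {n : Type*} [Fintype n] [DecidableEq n]

lemma frob_nonneg (A : Matrix n n ℂ) : 0 ≤ frob A :=
  Finset.sum_nonneg fun _ _ => Finset.sum_nonneg fun _ _ => Complex.normSq_nonneg _

lemma sum_conj_mul_eq_trace (A B : Matrix n n ℂ) :
    ∑ i, ∑ j, (starRingEnd ℂ) (A i j) * B i j = (Aᴴ * B).trace := by
  simp only [Matrix.trace, Matrix.diag, Matrix.mul_apply, Matrix.conjTranspose_apply]
  exact Finset.sum_comm

lemma trace_conjTranspose_mul_self' (A : Matrix n n ℂ) :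
    (Aᴴ * A).trace = (frob A : ℂ) := by
  rw [← sum_conj_mul_eq_trace]
  push_cast [frob]
  exact Finset.sum_congr rfl fun i _ => Finset.sum_congr rfl fun j _ =>
    (Complex.normSq_eq_conj_mul_self).symm

lemma sum_eigenvalues_eq_frob (A : Matrix n n ℂ) :
    ∑ i, (Matrix.posSemidef_conjTranspose_mul_self A).isHermitian.eigenvalues i = frob A := by
  have hH := (Matrix.posSemidef_conjTranspose_mul_self A).isHermitian
  have h1 : ((Aᴴ * A)).trace = (↑(∑ i, hH.eigenvalues i) : ℂ) := by
    conv_lhs => rw [hH.spectral_theorem, Unitary.conjStarAlgAut_apply]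
    rw [Matrix.trace_mul_cycle]
    rw [(Matrix.mem_unitaryGroup_iff').mp (Matrix.IsHermitian.eigenvectorUnitary hH).2]
    simp [Matrix.trace_diagonal]
  have := h1.symm.trans (trace_conjTranspose_mul_self' A)
  exact_mod_cast this

lemma prod_eigenvalues_eq (A : Matrix n n ℂ) :
    ∏ i, (Matrix.posSemidef_conjTranspose_mul_self A).isHermitian.eigenvalues i
      = Complex.normSq A.det := by
  have hH := (Matrix.posSemidef_conjTranspose_mul_self A).isHermitian
  have h1 : (Aᴴ * A).det = (↑(∏ i, hH.eigenvalues i) : ℂ) := by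
    rw [hH.det_eq_prod_eigenvalues]; push_cast; rfl
  have h2 : (Aᴴ * A).det = (Complex.normSq A.det : ℂ) := by
    rw [Matrix.det_mul, Matrix.det_conjTranspose, Complex.normSq_eq_conj_mul_self]; rfl
  have := h1.symm.trans h2
  exact_mod_cast this

lemma traceNorm_nonneg (A : Matrix n n ℂ) : 0 ≤ traceNorm A :=
  Finset.sum_nonneg fun _ _ => Real.sqrt_nonneg _

lemma traceNorm_sq (A : Matrix (Fin 2) (Fin 2) ℂ) :
    traceNorm A ^ 2 = frob A + 2 * ‖A.det‖ := by
  have hP := Matrix.posSemidef_conjTranspose_mul_self A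
  set μ := hP.isHermitian.eigenvalues with hμ
  have h0 : 0 ≤ μ 0 := hP.eigenvalues_nonneg 0
  have h1 : 0 ≤ μ 1 := hP.eigenvalues_nonneg 1
  have hsum : μ 0 + μ 1 = frob A := by
    have := sum_eigenvalues_eq_frob A; rwa [Fin.sum_univ_two] at this
  have hprod : μ 0 * μ 1 = Complex.normSq A.det := by
    have := prod_eigenvalues_eq A; rwa [Fin.prod_univ_two] at this
  have habs : Real.sqrt (μ 0) * Real.sqrt (μ 1) = ‖A.det‖ := by
    rw [← Real.sqrt_mul h0, hprod, Complex.norm_def]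
  have htn : traceNorm A = Real.sqrt (μ 0) + Real.sqrt (μ 1) := by
    rw [traceNorm, Fin.sum_univ_two]
  rw [htn, add_sq, Real.sq_sqrt h0, Real.sq_sqrt h1]
  nlinarith [habs, hsum]

lemma traceNorm_le_sqrt (A : Matrix (Fin 2) (Fin 2) ℂ) :
    traceNorm A ≤ Real.sqrt (2 * frob A) := by
  rw [Real.le_sqrt (traceNorm_nonneg A) (by nlinarith [frob_nonneg A]), traceNorm_sq]
  have hP := Matrix.posSemidef_conjTranspose_mul_self A
  have h0 : (0:ℝ) ≤ hP.isHermitian.eigenvalues 0 := hP.eigenvalues_nonneg 0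
  have h1 : (0:ℝ) ≤ hP.isHermitian.eigenvalues 1 := hP.eigenvalues_nonneg 1
  have hsum : hP.isHermitian.eigenvalues 0 + hP.isHermitian.eigenvalues 1 = frob A := by
    have := sum_eigenvalues_eq_frob A; rwa [Fin.sum_univ_two] at this
  have habs : ‖A.det‖ = Real.sqrt (hP.isHermitian.eigenvalues 0) *
      Real.sqrt (hP.isHermitian.eigenvalues 1) := by
    rw [← Real.sqrt_mul h0, Complex.norm_def]
    congr 1
    have := prod_eigenvalues_eq A; rw [Fin.prod_univ_two] at this; rw [this]
  nlinarith [Real.sq_sqrt h0, Real.sq_sqrt h1,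
    sq_nonneg (Real.sqrt (hP.isHermitian.eigenvalues 0) - Real.sqrt (hP.isHermitian.eigenvalues 1))]

lemma det_herm_traceless (A : Matrix (Fin 2) (Fin 2) ℂ) (hA : A.IsHermitian)
    (ht : A.trace = 0) : 2 * ‖A.det‖ = frob A := by
  have h10 : A 1 0 = (starRingEnd ℂ) (A 0 1) := (hA.apply 1 0).symm
  have ha : A 0 0 = ((A 0 0).re : ℂ) := by
    have := hA.apply 0 0
    exact (Complex.conj_eq_iff_re.mp this).symm
  have hd : A 1 1 = -A 0 0 := by
    have : A.trace = A 0 0 + A 1 1 := by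
      simp [Matrix.trace, Matrix.diag, Fin.sum_univ_two]
    rw [this] at ht; linear_combination ht
  set r := (A 0 0).re with hr
  have hdet : A.det = -(((r^2 + Complex.normSq (A 0 1)) : ℝ) : ℂ) := by
    rw [Matrix.det_fin_two, h10, hd, ha, Complex.mul_conj]
    push_cast; ring
  have habs : ‖A.det‖ = r^2 + Complex.normSq (A 0 1) := by
    rw [hdet, norm_neg, Complex.norm_real, Real.norm_eq_abs,
      _root_.abs_of_nonneg (by nlinarith [Complex.normSq_nonneg (A 0 1), sq_nonneg r])]
  have hfrob : frob A = 2 * (r^2 + Complex.normSq (A 0 1)) := by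
    simp only [frob, Fin.sum_univ_two, h10, hd, Complex.normSq_conj, Complex.normSq_neg]
    rw [ha]; simp [Complex.normSq_ofReal]; ring
  rw [habs, hfrob]

lemma traceNorm_herm_traceless (A : Matrix (Fin 2) (Fin 2) ℂ) (hA : A.IsHermitian)
    (ht : A.trace = 0) : traceNorm A = Real.sqrt (2 * frob A) := by
  have h2 : traceNorm A ^ 2 = 2 * frob A := by
    rw [traceNorm_sq, det_herm_traceless A hA ht]; ring
  rw [← h2, Real.sqrt_sq (traceNorm_nonneg A)]

lemma dissipator_smul (c : ℂ) (M x : Matrix n n ℂ) :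
    dissipator (c • M) x = (c * star c) • dissipator M x := by
  simp only [dissipator, Matrix.conjTranspose_smul, smul_mul_assoc, Matrix.mul_smul, smul_smul,
    smul_sub, smul_add, Matrix.smul_apply]
  match_scalars <;> ring

lemma pauli_sum (x : Matrix (Fin 2) (Fin 2) ℂ) :
    dissipator !![0, 1; 1, 0] x + dissipator !![0, -Complex.I; Complex.I, 0] x
      + dissipator !![1, 0; 0, -1] x = (2:ℂ) • (x.trace • (1 : Matrix (Fin 2) (Fin 2) ℂ))
        - (4:ℂ) • x := by
  ext i j
  fin_cases i <;> fin_cases j <;>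
    (simp [dissipator, Matrix.mul_apply, Fin.sum_univ_two, Matrix.trace, Matrix.diag,
      Matrix.one_apply, Matrix.conjTranspose_apply, Matrix.vecMul, dotProduct,
      Matrix.cons_val_zero, Matrix.cons_val_one, Matrix.head_cons]; ring_nf;
      rw [Complex.I_sq]; ring)

lemma trace_gen_zero (γ : ℝ) (Hm M : Matrix (Fin 2) (Fin 2) ℂ) :
    (hamTerm Hm M + ((2*γ:ℂ) • (M.trace • (1 : Matrix (Fin 2) (Fin 2) ℂ))
      - (4*γ:ℂ) • M)).trace = 0 := by
  simp [hamTerm, Matrix.trace_add, Matrix.trace_sub, Matrix.trace_smul,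
    Matrix.trace_mul_comm Hm M, Matrix.trace_one]
  ring

lemma im_trace_comm_zero (Hm A : Matrix n n ℂ) (hH : Hmᴴ = Hm) :
    ((Aᴴ * (Hm * A - A * Hm)).trace).im = 0 := by
  have h : star ((Aᴴ * (Hm * A - A * Hm)).trace) = (Aᴴ * (Hm * A - A * Hm)).trace := by
    rw [← Matrix.trace_conjTranspose]
    rw [Matrix.conjTranspose_mul, Matrix.conjTranspose_sub, Matrix.conjTranspose_mul,
      Matrix.conjTranspose_mul, Matrix.conjTranspose_conjTranspose, hH]
    rw [Matrix.sub_mul, Matrix.mul_sub, Matrix.trace_sub, Matrix.trace_sub]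
    congr 1
    · rw [Matrix.mul_assoc]
    · rw [Matrix.mul_assoc, Matrix.trace_mul_comm, Matrix.mul_assoc]
  have := congrArg Complex.im h
  simp only [Complex.star_def, Complex.conj_im] at this
  linarith

end Aux

/-- the depolarizing dissipator with jump operators `√γ σˣ, √γ σʸ, √γ σᶻ`
contracts at rate `4γ` independently of the (time-dependent) Hamiltonian. -/
theorem depolarizing_contraction_rate (γ : ℝ) (hγ : 0 < γ)
    (L : Fin 3 → Matrix (Fin 2) (Fin 2) ℂ)
    (hL : L = fun j => (Real.sqrt γ : ℂ) •
      ![!![0, 1; 1, 0], !![0, -Complex.I; Complex.I, 0], !![1, 0; 0, -1]] j) :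
    ∀ H : ℝ → Matrix (Fin 2) (Fin 2) ℂ, IsHamiltonianFamily H →
      ∀ s t : ℝ, 0 ≤ s → s ≤ t → ∀ ρ σ : ℝ → Matrix (Fin 2) (Fin 2) ℂ,
        IsSolution (driven H L) s ρ → IsSolution (driven H L) s σ →
        IsDensity (ρ s) → IsDensity (σ s) →
        traceNorm (ρ t - σ t) ≤
          Real.exp (-(4 * γ) * (t - s)) * traceNorm (ρ s - σ s) := by
  intro H hHam s t hs hst ρ σ hρsol hσsol hρ hσ
  have hTD : ∀ x : Matrix (Fin 2) (Fin 2) ℂ,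
      totalDissipator L x
        = (2*γ:ℂ) • (x.trace • (1 : Matrix (Fin 2) (Fin 2) ℂ)) - (4*γ:ℂ) • x := by
    intro x
    have hc : ((Real.sqrt γ : ℂ)) * star ((Real.sqrt γ : ℂ)) = (γ:ℂ) := by
      rw [Complex.star_def, Complex.conj_ofReal, ← Complex.ofReal_mul,
        Real.mul_self_sqrt hγ.le]
    rw [hL]
    simp only [totalDissipator]
    rw [Fin.sum_univ_three]
    simp only [Matrix.cons_val_zero, Matrix.cons_val_one, Matrix.head_cons,
      Matrix.cons_val_two, Matrix.tail_cons]
    rw [dissipator_smul, dissipator_smul, dissipator_smul, hc, ← smul_add, ← smul_add,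
      pauli_sum]
    match_scalars <;> ring
  set Δ : ℝ → Matrix (Fin 2) (Fin 2) ℂ := fun u => ρ u - σ u with hΔdef
  have hgen : ∀ u, driven H L u (ρ u) - driven H L u (σ u)
      = hamTerm (H u) (Δ u) + ((2*γ:ℂ) • ((Δ u).trace • 1) - (4*γ:ℂ) • Δ u) := by
    intro u
    simp only [driven, hTD, hΔdef, hamTerm, Matrix.trace_sub, Matrix.mul_sub,
      Matrix.sub_mul, smul_sub, sub_smul, smul_add]
    module
  have hΔderiv : ∀ u, s ≤ u → ∀ i j, HasDerivAt (fun v => Δ v i j)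
      ((hamTerm (H u) (Δ u) + ((2*γ:ℂ) • ((Δ u).trace • 1) - (4*γ:ℂ) • Δ u)) i j) u := by
    intro u hu i j
    have h := (hρsol u hu i j).sub (hσsol u hu i j)
    rw [← Matrix.sub_apply, hgen u] at h
    exact h
  have htrs : (Δ s).trace = 0 := by
    simp [hΔdef, Matrix.trace_sub, hρ.2, hσ.2]
  have htrace0 : ∀ u, s ≤ u → (Δ u).trace = 0 := by
    intro u hu
    have hTder : ∀ v ∈ Set.Icc s u,
        HasDerivWithinAt (fun w => Δ w 0 0 + Δ w 1 1) 0 (Set.Icc s u) v := by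
      intro v hv
      have h := (hΔderiv v hv.1 0 0).add (hΔderiv v hv.1 1 1)
      have hz : (hamTerm (H v) (Δ v)
          + ((2*γ:ℂ) • ((Δ v).trace • 1) - (4*γ:ℂ) • Δ v)) 0 0
          + (hamTerm (H v) (Δ v)
          + ((2*γ:ℂ) • ((Δ v).trace • 1) - (4*γ:ℂ) • Δ v)) 1 1 = 0 := by
        have := trace_gen_zero γ (H v) (Δ v)
        rwa [Matrix.trace, Fin.sum_univ_two] at this
      rw [hz] at h
      exact h.hasDerivWithinAt
    have hb := Convex.norm_image_sub_le_of_norm_hasDerivWithin_le (C := 0) hTder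
      (fun v _ => by simp) (convex_Icc s u) (Set.left_mem_Icc.mpr hu)
      (Set.right_mem_Icc.mpr hu)
    simp only [zero_mul] at hb
    have heq : Δ u 0 0 + Δ u 1 1 = Δ s 0 0 + Δ s 1 1 := by
      have := le_antisymm hb (norm_nonneg _)
      rwa [norm_eq_zero, sub_eq_zero] at this
    have htrs' : Δ s 0 0 + Δ s 1 1 = 0 := by
      have h' := htrs
      rwa [Matrix.trace, Fin.sum_univ_two, Matrix.diag_apply, Matrix.diag_apply] at h'
    rw [Matrix.trace, Fin.sum_univ_two, Matrix.diag_apply, Matrix.diag_apply, heq]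
    exact htrs'
  set g : ℝ → ℝ := fun v => frob (Δ v) with hgdef
  have hgderiv : ∀ u, s ≤ u → HasDerivAt g (-(8*γ) * g u) u := by
    intro u hu
    set K : Matrix (Fin 2) (Fin 2) ℂ := hamTerm (H u) (Δ u) - (4*γ:ℂ) • Δ u with hKdef
    have hKd : ∀ i j, HasDerivAt (fun v => Δ v i j) (K i j) u := by
      intro i j
      have h := hΔderiv u hu i j
      rw [htrace0 u hu] at h
      simpa [hKdef, sub_eq_add_neg] using h
    have hterm : ∀ i j, HasDerivAt (fun v => Complex.normSq (Δ v i j))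
        (2 * ((starRingEnd ℂ) (Δ u i j) * K i j).re) u := by
      intro i j
      have he := hKd i j
      have hre : HasDerivAt (fun v => (Δ v i j).re) ((K i j).re) u :=
        Complex.reCLM.hasFDerivAt.comp_hasDerivAt u he
      have him : HasDerivAt (fun v => (Δ v i j).im) ((K i j).im) u :=
        Complex.imCLM.hasFDerivAt.comp_hasDerivAt u he
      have h := (hre.fun_mul hre).fun_add (him.fun_mul him)
      have hfun : (fun v => Complex.normSq (Δ v i j))
          = fun v => (Δ v i j).re * (Δ v i j).re + (Δ v i j).im * (Δ v i j).im := by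
        funext w; simp [Complex.normSq_apply]
      rw [hfun]
      refine h.congr_deriv ?_
      simp [Complex.mul_re]
      ring
    have hsum : HasDerivAt g
        (∑ i : Fin 2, ∑ j : Fin 2, 2 * ((starRingEnd ℂ) (Δ u i j) * K i j).re) u := by
      apply HasDerivAt.fun_sum
      intro i _
      exact HasDerivAt.fun_sum fun j _ => hterm i j
    have hval : (∑ i : Fin 2, ∑ j : Fin 2, 2 * ((starRingEnd ℂ) (Δ u i j) * K i j).re)
        = -(8*γ) * g u := by
      have h1 : (∑ i : Fin 2, ∑ j : Fin 2, 2 * ((starRingEnd ℂ) (Δ u i j) * K i j).re)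
          = 2 * (((Δ u)ᴴ * K).trace).re := by
        rw [← sum_conj_mul_eq_trace]
        rw [Complex.re_sum]
        rw [Finset.mul_sum]
        refine Finset.sum_congr rfl fun i _ => ?_
        rw [Complex.re_sum, Finset.mul_sum]
      rw [h1]
      have h2 : ((Δ u)ᴴ * K).trace
          = (-Complex.I) * ((Δ u)ᴴ * (H u * Δ u - Δ u * H u)).trace
            - (4*γ:ℂ) * (frob (Δ u) : ℂ) := by
        rw [hKdef, hamTerm, Matrix.mul_sub, Matrix.trace_sub, Matrix.mul_smul,
          Matrix.mul_smul, Matrix.trace_smul, Matrix.trace_smul,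
          trace_conjTranspose_mul_self']
        simp [smul_eq_mul]
      rw [h2]
      have h3 := im_trace_comm_zero (H u) (Δ u) (hHam.1 u)
      simp only [Complex.sub_re, Complex.mul_re, Complex.neg_re, Complex.I_re,
        Complex.neg_im, Complex.I_im, Complex.ofReal_re, Complex.ofReal_im, h3]
      simp [hgdef]
      ring
    rw [← hval]
    exact hsum
  have hgs_nonneg : 0 ≤ g s := frob_nonneg _
  have key : g t = Real.exp (-(8*γ)*(t-s)) * g s := by
    have hEder : ∀ v ∈ Set.Icc s t,
        HasDerivWithinAt (fun w => Real.exp (8*γ*(w-s)) * g w) 0 (Set.Icc s t) v := by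
      intro v hv
      have hexp : HasDerivAt (fun w => Real.exp (8*γ*(w-s)))
          (Real.exp (8*γ*(v-s)) * (8*γ)) v := by
        have h1 : HasDerivAt (fun w => 8*γ*(w-s)) (8*γ) v := by
          simpa using ((hasDerivAt_id v).sub_const s).const_mul (8*γ)
        simpa [mul_comm] using h1.exp
      have h := hexp.mul (hgderiv v hv.1)
      have hz : Real.exp (8*γ*(v-s)) * (8*γ) * g v
          + Real.exp (8*γ*(v-s)) * (-(8*γ) * g v) = 0 := by ring
      rw [hz] at h
      exact h.hasDerivWithinAt
    have hb := Convex.norm_image_sub_le_of_norm_hasDerivWithin_le (C := 0) hEder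
      (fun v _ => by simp) (convex_Icc s t) (Set.left_mem_Icc.mpr hst)
      (Set.right_mem_Icc.mpr hst)
    simp only [zero_mul] at hb
    have heq : Real.exp (8*γ*(t-s)) * g t = Real.exp (8*γ*(s-s)) * g s := by
      have := le_antisymm hb (norm_nonneg _)
      rwa [norm_eq_zero, sub_eq_zero] at this
    rw [sub_self, mul_zero, Real.exp_zero, one_mul] at heq
    rw [← heq, ← mul_assoc, ← Real.exp_add,
      show -(8*γ)*(t-s) + 8*γ*(t-s) = 0 by ring, Real.exp_zero, one_mul]
  have hherm : (Δ s).IsHermitian := hρ.1.1.sub hσ.1.1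
  have step1 : traceNorm (ρ t - σ t) ≤ Real.sqrt (2 * g t) := traceNorm_le_sqrt _
  have step2 : Real.sqrt (2 * g t) = Real.exp (-(4*γ)*(t-s)) * Real.sqrt (2 * g s) := by
    rw [key, show 2*(Real.exp (-(8*γ)*(t-s)) * g s)
      = Real.exp (-(8*γ)*(t-s)) * (2 * g s) by ring]
    rw [Real.sqrt_mul (Real.exp_nonneg _), ← Real.exp_half]
    congr 2
    ring
  have step3 : Real.sqrt (2 * g s) = traceNorm (ρ s - σ s) :=
    (traceNorm_herm_traceless _ hherm htrs).symm
  calc traceNorm (ρ t - σ t) ≤ Real.sqrt (2 * g t) := step1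
    _ = Real.exp (-(4*γ)*(t-s)) * traceNorm (ρ s - σ s) := by rw [step2, step3]

end Paper
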